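/- For r > 0, n ≥ 1 and real a > 0, ∫_{−∞}^{∞} (1 + (r + y²/(2r))/a)^(−n) dy = √(2πr(a+r)) · (1+r/a)^(−n) · Γ(n−1/2)/Γ(n), and Γ(n−1/2)/Γ(n) → 0 like n^(−1/2), i.e. √n · Γ(n−1/2)/Γ(n) → 1 as n → ∞. -/

import Mathlib

open Real Filter MeasureTheory Topology

private lemma sig_cont (m : ℤ) : Continuous fun u : ℝ => (1 + u ^ 2) ^ m := by
  refine Continuous.zpow₀ (by continuity) m fun u => Or.inl ?_
  positivity

private lemma sig_integrable (n : ℕ) (hn : 1 ≤ n) :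
    Integrable fun u : ℝ => (1 + u ^ 2) ^ (-(n : ℤ)) := by
  refine integrable_inv_one_add_sq.mono' ((sig_cont _).aestronglyMeasurable) ?_
  filter_upwards with u
  have h1 : (1 : ℝ) ≤ 1 + u ^ 2 := by nlinarith [sq_nonneg u]
  have h0 : (0 : ℝ) < 1 + u ^ 2 := by positivity
  rw [Real.norm_eq_abs, abs_of_nonneg (by positivity), zpow_neg, zpow_natCast]
  refine inv_anti₀ h0 ?_
  calc 1 + u ^ 2 = (1 + u ^ 2) ^ 1 := (pow_one _).symm
    _ ≤ (1 + u ^ 2) ^ n := pow_le_pow_right₀ h1 hn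

private lemma sig_rec (n : ℕ) (hn : 1 ≤ n) :
    (∫ u : ℝ, (1 + u ^ 2) ^ (-((n : ℤ) + 1)))
      = ((2 * (n:ℝ) - 1) / (2 * (n:ℝ))) * ∫ u : ℝ, (1 + u ^ 2) ^ (-(n : ℤ)) := by
  set f : ℝ → ℝ := fun u => u * (1 + u ^ 2) ^ (-(n : ℤ)) with hf
  set f' : ℝ → ℝ := fun u =>
    (1 - 2 * n) * (1 + u ^ 2) ^ (-(n : ℤ)) + (2 * n) * (1 + u ^ 2) ^ (-((n : ℤ) + 1)) with hf'
  have hn0 : (0:ℝ) < n := by exact_mod_cast hn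
  have hderiv : ∀ u : ℝ, HasDerivAt f (f' u) u := by
    intro u
    have h0 : (0 : ℝ) < 1 + u ^ 2 := by positivity
    have hg : HasDerivAt (fun u : ℝ => 1 + u ^ 2) (2 * u) u := by
      simpa using ((hasDerivAt_pow 2 u).const_add 1)
    have hz : HasDerivAt (fun u : ℝ => (1 + u ^ 2) ^ (-(n : ℤ)))
        (((-(n : ℤ) : ℤ) : ℝ) * (1 + u ^ 2) ^ ((-(n : ℤ)) - 1) * (2 * u)) u :=
      by have := (hasDerivAt_zpow (-(n : ℤ)) (1 + u ^ 2) (Or.inl h0.ne')).comp u hg; exact this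
    have := (hasDerivAt_id u).mul hz
    refine this.congr_deriv ?_
    have hkey : ∀ m : ℤ, (1 + u ^ 2) ^ (m - 1) = (1 + u ^ 2) ^ m / (1 + u ^ 2) := by
      intro m; rw [zpow_sub_one₀ h0.ne', div_eq_mul_inv]
    have h1 : (1 + u ^ 2) ^ ((-(n : ℤ)) - 1) = (1 + u ^ 2) ^ (-(n : ℤ)) / (1 + u ^ 2) :=
      hkey _
    have h2 : (1 + u ^ 2) ^ (-((n : ℤ) + 1)) = (1 + u ^ 2) ^ (-(n : ℤ)) / (1 + u ^ 2) := by
      rw [show -((n : ℤ) + 1) = (-(n : ℤ)) - 1 by ring]; exact hkey _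
    simp only [hf', h1, h2, id_eq]
    push_cast
    field_simp
    ring
  have hint1 := sig_integrable n hn
  have hint2 : Integrable fun u : ℝ => (1 + u ^ 2) ^ (-((n : ℤ) + 1)) := by
    have := sig_integrable (n + 1) (by omega)
    simpa [Nat.cast_add] using this
  have hf'int : Integrable f' := by
    exact ((hint1.const_mul _).add (hint2.const_mul _))
  have hbound : ∀ u : ℝ, 1 ≤ |u| → ‖f u‖ ≤ |u|⁻¹ := by
    intro u hu
    have h0 : (0 : ℝ) < 1 + u ^ 2 := by positivity
    have hu0 : (0:ℝ) < |u| := lt_of_lt_of_le one_pos hu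
    have husq : (1:ℝ) ≤ u ^ 2 := by nlinarith [sq_abs u]
    have hpow : u ^ 2 ≤ (1 + u ^ 2) ^ n := by
      calc u ^ 2 ≤ 1 + u ^ 2 := by linarith
        _ = (1 + u ^ 2) ^ 1 := (pow_one _).symm
        _ ≤ (1 + u ^ 2) ^ n := pow_le_pow_right₀ (by nlinarith [sq_nonneg u]) hn
    have : ‖f u‖ = |u| * ((1 + u ^ 2) ^ n)⁻¹ := by
      rw [hf]
      rw [Real.norm_eq_abs, abs_mul, zpow_neg, zpow_natCast,
        abs_of_nonneg (by positivity : (0:ℝ) ≤ ((1 + u ^ 2) ^ n)⁻¹)]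
    rw [this]
    have hsq : (0:ℝ) < u ^ 2 := by nlinarith
    calc |u| * ((1 + u ^ 2) ^ n)⁻¹ ≤ |u| * (u ^ 2)⁻¹ :=
          mul_le_mul_of_nonneg_left (inv_anti₀ hsq hpow) (abs_nonneg u)
      _ = |u|⁻¹ := by rw [← sq_abs]; field_simp
  have htop : Tendsto f atTop (𝓝 0) := by
    refine squeeze_zero_norm' ?_ tendsto_inv_atTop_zero
    filter_upwards [eventually_ge_atTop (1:ℝ)] with u hu
    have := hbound u (by rw [abs_of_nonneg (by linarith)]; exact hu)
    rwa [abs_of_nonneg (by linarith : (0:ℝ) ≤ u)] at this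
  have hbot : Tendsto f atBot (𝓝 0) := by
    refine squeeze_zero_norm' ?_ (tendsto_inv_atTop_zero.comp tendsto_neg_atBot_atTop)
    filter_upwards [eventually_le_atBot (-1:ℝ)] with u hu
    have := hbound u (by rw [abs_of_nonpos (by linarith)]; linarith)
    rwa [abs_of_nonpos (by linarith : u ≤ (0:ℝ))] at this
  have hzero : (∫ u, f' u) = 0 - 0 :=
    integral_of_hasDerivAt_of_tendsto hderiv hf'int hbot htop
  rw [sub_zero] at hzero
  have hsplit : (∫ u, f' u)
      = (1 - 2 * n) * (∫ u : ℝ, (1 + u ^ 2) ^ (-(n : ℤ)))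
        + (2 * n) * ∫ u : ℝ, (1 + u ^ 2) ^ (-((n : ℤ) + 1)) := by
    rw [hf']
    rw [integral_add (hint1.const_mul _) (hint2.const_mul _), integral_const_mul,
      integral_const_mul]
  rw [hsplit] at hzero
  have h2n : (0:ℝ) < 2 * (n:ℝ) := by positivity
  rw [div_mul_eq_mul_div, eq_div_iff h2n.ne']
  linarith [hzero]

private lemma sig_closed (n : ℕ) (hn : 1 ≤ n) :
    (∫ u : ℝ, (1 + u ^ 2) ^ (-(n : ℤ)))
      = Real.sqrt π * (Real.Gamma ((n : ℝ) - 1/2) / Real.Gamma (n : ℝ)) := by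
  induction n, hn using Nat.le_induction with
  | base =>
      have h1 : (∫ u : ℝ, (1 + u ^ 2) ^ (-((1:ℕ) : ℤ))) = π := by
        simpa using integral_univ_inv_one_add_sq
      rw [h1]
      norm_num [Real.Gamma_one]
      rw [Real.Gamma_one_half_eq]
      exact (Real.mul_self_sqrt pi_pos.le).symm
  | succ n hn ih =>
      have hrec := sig_rec n hn
      have hcast : ((n + 1 : ℕ) : ℤ) = (n : ℤ) + 1 := by push_cast; ring
      rw [hcast, hrec, ih]
      have hn0 : (0:ℝ) < n := by exact_mod_cast hn
      have hne : ((n:ℝ) - 1/2) ≠ 0 := by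
        have : (1:ℝ) ≤ (n:ℝ) := by exact_mod_cast hn
        intro h; nlinarith
      have hG1 : Real.Gamma (((n:ℕ):ℝ) + 1 - 1/2) = ((n:ℝ) - 1/2) * Real.Gamma ((n:ℝ) - 1/2) := by
        rw [show ((n:ℕ):ℝ) + 1 - 1/2 = ((n:ℝ) - 1/2) + 1 by push_cast; ring,
          Real.Gamma_add_one hne]
      have hG2 : Real.Gamma (((n:ℕ):ℝ) + 1) = (n:ℝ) * Real.Gamma (n:ℝ) := by
        rw [Real.Gamma_add_one hn0.ne']
      push_cast
      rw [hG1, hG2]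
      have hGpos : 0 < Real.Gamma (n:ℝ) := Real.Gamma_pos_of_pos hn0
      field_simp

private lemma gamma_midpoint (x : ℝ) (hx : 0 < x) :
    Real.Gamma (x + 1/2) ^ 2 ≤ Real.Gamma x * Real.Gamma (x + 1) := by
  have hx1 : (0:ℝ) < x + 1 := by linarith
  have h := Real.convexOn_log_Gamma.2 (Set.mem_Ioi.mpr hx) (Set.mem_Ioi.mpr hx1)
    (by norm_num : (0:ℝ) ≤ 1/2) (by norm_num : (0:ℝ) ≤ 1/2) (by norm_num)
  have hmid : (1/2 : ℝ) • x + (1/2 : ℝ) • (x + 1) = x + 1/2 := by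
    rw [smul_eq_mul, smul_eq_mul]; ring
  rw [hmid] at h
  simp only [Function.comp_apply, smul_eq_mul] at h
  have hp1 : 0 < Real.Gamma x := Real.Gamma_pos_of_pos hx
  have hp2 : 0 < Real.Gamma (x + 1) := Real.Gamma_pos_of_pos hx1
  have hpm : 0 < Real.Gamma (x + 1/2) := Real.Gamma_pos_of_pos (by linarith)
  have h2 : Real.log (Real.Gamma (x + 1/2) ^ 2) ≤ Real.log (Real.Gamma x * Real.Gamma (x + 1)) := by
    rw [Real.log_pow, Real.log_mul hp1.ne' hp2.ne']
    push_cast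
    linarith
  exact (Real.log_le_log_iff (by positivity) (by positivity)).mp h2

private lemma gamma_ratio_tendsto :
    Tendsto (fun n : ℕ => Real.sqrt (n : ℝ) * (Real.Gamma ((n : ℝ) - 1/2) / Real.Gamma (n : ℝ)))
      atTop (nhds 1) := by
  have hden : ∀ c : ℝ, Tendsto (fun n : ℕ => (n : ℝ) - c) atTop atTop := by
    intro c
    simpa [sub_eq_add_neg] using
      (tendsto_atTop_add_const_right atTop (-c) tendsto_natCast_atTop_atTop)
  have hlim : ∀ c : ℝ, Tendsto (fun n : ℕ => Real.sqrt ((n : ℝ) / ((n : ℝ) - c))) atTop (𝓝 1) := by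
    intro c
    have h1 : Tendsto (fun n : ℕ => (n : ℝ) / ((n : ℝ) - c)) atTop (𝓝 1) := by
      have h2 : Tendsto (fun n : ℕ => 1 + c / ((n : ℝ) - c)) atTop (𝓝 (1 + 0)) :=
        tendsto_const_nhds.add (tendsto_const_nhds.div_atTop (hden c))
      rw [add_zero] at h2
      refine h2.congr' ?_
      filter_upwards [(hden c).eventually_gt_atTop 0] with n hn
      field_simp
      ring
    have := (Real.continuous_sqrt.tendsto 1).comp h1
    rw [Real.sqrt_one] at this
    exact this
  have hupper := hlim 1
  have hlower := hlim (1/2)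
  refine tendsto_of_tendsto_of_tendsto_of_le_of_le' hlower hupper ?_ ?_
  · -- lower bound : √(n/(n-1/2)) ≤ √n * Γ(n-1/2)/Γ(n)
    filter_upwards [eventually_ge_atTop 2] with n hn
    have hn1 : (1:ℝ) ≤ (n:ℝ) := by exact_mod_cast (by omega : 1 ≤ n)
    have hx : (0:ℝ) < (n:ℝ) - 1/2 := by linarith
    have h := gamma_midpoint ((n:ℝ) - 1/2) hx
    rw [show ((n:ℝ) - 1/2) + 1/2 = (n:ℝ) by ring] at h
    have hG1 : Real.Gamma (((n:ℝ) - 1/2) + 1) = ((n:ℝ) - 1/2) * Real.Gamma ((n:ℝ) - 1/2) :=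
      Real.Gamma_add_one hx.ne'
    rw [hG1] at h
    have hGpos : 0 < Real.Gamma (n:ℝ) := Real.Gamma_pos_of_pos (by linarith)
    have hGm : 0 < Real.Gamma ((n:ℝ) - 1/2) := Real.Gamma_pos_of_pos hx
    set b := Real.Gamma ((n:ℝ) - 1/2) / Real.Gamma (n:ℝ) with hb
    have hbpos : 0 < b := div_pos hGm hGpos
    have hsq : 1 / ((n:ℝ) - 1/2) ≤ b ^ 2 := by
      rw [hb, div_pow, div_le_div_iff₀ hx (by positivity)]
      nlinarith [h]
    have hb' : Real.sqrt (1 / ((n:ℝ) - 1/2)) ≤ b := by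
      calc Real.sqrt (1 / ((n:ℝ) - 1/2)) ≤ Real.sqrt (b ^ 2) := Real.sqrt_le_sqrt hsq
        _ = b := Real.sqrt_sq hbpos.le
    calc Real.sqrt ((n:ℝ) / ((n:ℝ) - 1/2))
        = Real.sqrt ((n:ℝ) * (1 / ((n:ℝ) - 1/2))) := by rw [mul_one_div]
      _ = Real.sqrt (n:ℝ) * Real.sqrt (1 / ((n:ℝ) - 1/2)) := Real.sqrt_mul (by positivity) _
      _ ≤ Real.sqrt (n:ℝ) * b := mul_le_mul_of_nonneg_left hb' (Real.sqrt_nonneg _)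
  · -- upper bound : √n * Γ(n-1/2)/Γ(n) ≤ √(n/(n-1))
    filter_upwards [eventually_ge_atTop 2] with n hn
    have hn2 : (2:ℝ) ≤ (n:ℝ) := by exact_mod_cast hn
    have hx : (0:ℝ) < (n:ℝ) - 1 := by linarith
    have h := gamma_midpoint ((n:ℝ) - 1) hx
    rw [show ((n:ℝ) - 1) + 1/2 = (n:ℝ) - 1/2 by ring,
      show ((n:ℝ) - 1) + 1 = (n:ℝ) by ring] at h
    have hG1 : Real.Gamma (n:ℝ) = ((n:ℝ) - 1) * Real.Gamma ((n:ℝ) - 1) := by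
      rw [show (n:ℝ) = ((n:ℝ) - 1) + 1 by ring, Real.Gamma_add_one hx.ne']
      ring_nf
    have hGpos : 0 < Real.Gamma (n:ℝ) := Real.Gamma_pos_of_pos (by linarith)
    have hGm : 0 < Real.Gamma ((n:ℝ) - 1/2) := Real.Gamma_pos_of_pos (by linarith)
    have hGm1 : 0 < Real.Gamma ((n:ℝ) - 1) := Real.Gamma_pos_of_pos hx
    set b := Real.Gamma ((n:ℝ) - 1/2) / Real.Gamma (n:ℝ) with hb
    have hbpos : 0 < b := div_pos hGm hGpos
    have hsq : b ^ 2 ≤ 1 / ((n:ℝ) - 1) := by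
      rw [hb, div_pow, div_le_div_iff₀ (by positivity) hx]
      have : Real.Gamma ((n:ℝ) - 1) * Real.Gamma (n:ℝ) = Real.Gamma (n:ℝ) ^ 2 / ((n:ℝ) - 1) := by
        rw [hG1]; field_simp
      nlinarith [h, sq_nonneg (Real.Gamma (n:ℝ))]
    have hb' : b ≤ Real.sqrt (1 / ((n:ℝ) - 1)) := by
      calc b = Real.sqrt (b ^ 2) := (Real.sqrt_sq hbpos.le).symm
        _ ≤ Real.sqrt (1 / ((n:ℝ) - 1)) := Real.sqrt_le_sqrt hsq
    calc Real.sqrt (n:ℝ) * b ≤ Real.sqrt (n:ℝ) * Real.sqrt (1 / ((n:ℝ) - 1)) :=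
          mul_le_mul_of_nonneg_left hb' (Real.sqrt_nonneg _)
      _ = Real.sqrt ((n:ℝ) * (1 / ((n:ℝ) - 1))) := (Real.sqrt_mul (by positivity) _).symm
      _ = Real.sqrt ((n:ℝ) / ((n:ℝ) - 1)) := by rw [mul_one_div]

/-- The Gaussian-type integral `∫ (1 + (r + y²/(2r))/a)^(-n) dy` in closed form via the
Beta integral, together with the asymptotic `√n · Γ(n-1/2)/Γ(n) → 1`. -/
theorem strip_integral_gamma (r a : ℝ) (hr : 0 < r) (ha : 0 < a) :
    (∀ n : ℕ, 1 ≤ n →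
      (∫ y : ℝ, (1 + (r + y ^ 2 / (2 * r)) / a) ^ (-(n : ℤ)))
        = Real.sqrt (2 * π * r * (a + r)) * (1 + r / a) ^ (-(n : ℤ))
            * (Real.Gamma ((n : ℝ) - 1/2) / Real.Gamma (n : ℝ))) ∧
    Tendsto (fun n : ℕ => Real.sqrt (n : ℝ) * (Real.Gamma ((n : ℝ) - 1/2) / Real.Gamma (n : ℝ)))
      atTop (nhds 1) := by
  constructor
  · intro n hn
    set c := Real.sqrt (2 * r * (a + r)) with hc
    have hcpos : 0 < c := Real.sqrt_pos.mpr (by positivity)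
    have hc2 : c ^ 2 = 2 * r * (a + r) := Real.sq_sqrt (by positivity)
    have hpt : ∀ y : ℝ,
        (1 + (r + y ^ 2 / (2 * r)) / a) ^ (-(n : ℤ))
          = (1 + r / a) ^ (-(n : ℤ)) * (1 + (y / c) ^ 2) ^ (-(n : ℤ)) := by
      intro y
      rw [← mul_zpow]
      congr 1
      rw [div_pow, hc2]
      field_simp
      ring
    have h1 : (∫ y : ℝ, (1 + (r + y ^ 2 / (2 * r)) / a) ^ (-(n : ℤ)))
        = (1 + r / a) ^ (-(n : ℤ)) * ∫ y : ℝ, (1 + (y / c) ^ 2) ^ (-(n : ℤ)) := by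
      simp_rw [hpt]
      exact integral_const_mul _ _
    have h2 : (∫ y : ℝ, (1 + (y / c) ^ 2) ^ (-(n : ℤ)))
        = c * ∫ u : ℝ, (1 + u ^ 2) ^ (-(n : ℤ)) := by
      rw [MeasureTheory.Measure.integral_comp_div (fun u : ℝ => (1 + u ^ 2) ^ (-(n : ℤ))) c,
        abs_of_pos hcpos, smul_eq_mul]
    rw [h1, h2, sig_closed n hn]
    have hsqrt : Real.sqrt (2 * π * r * (a + r)) = Real.sqrt π * c := by
      rw [hc, ← Real.sqrt_mul pi_pos.le]
      congr 1
      ring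
    rw [hsqrt]
    ring
  · exact gamma_ratio_tendsto
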